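/- arXiv:1512.04596 — 4 statements merged into one kernel-verified Lean document; each statement's English description precedes it below -/
import Mathlib

section
/- Let (Ω, F, P, θ) be a stationary ergodic quadruple carrying σ, τ as in the context, and let S ≥ 2, 1 ≤ p ≤ S−1. Define the Loynes sequences V_0 = 0 ∈ ℝ^S, V_{n+1} = (Φ^p∘θ^{−1})(V_n∘θ^{−1}) and Y_0 = 0 ∈ ℝ^p, Y_{n+1} = (Ψ^p∘θ^{−1})(Y_n∘θ^{−1}) (i.e. V_{n+1}(ω) is the map Φ^p evaluated at the sample θ^{−1}ω applied to V_n(θ^{−1}ω), and similarly for Y). Then for every n ∈ ℕ, V_n(j) ≤ Y_n(j) almost surely for all j ∈ {1,…,p}; consequently the almost sure coordinatewise limits V^p and Y^p of these (nondecreasing) sequences satisfy V^p(j) ≤ Y^p(j) a.s. for all j ∈ {1,…,p}. -/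
open MeasureTheory ProbabilityTheory Filter

noncomputable section

/-- Positive part `[x]⁺ = max(x,0)`. -/
def pos (x : ℝ) : ℝ := max x 0

/-- Nondecreasing rearrangement of a finite real vector. -/
def sortVec {n : ℕ} (u : Fin n → ℝ) : Fin n → ℝ := u ∘ Tuple.sort u

/-- `u` belongs to `Ō_n`: nonnegative and nondecreasing coordinates. -/
def OSorted {n : ℕ} (u : Fin n → ℝ) : Prop := (∀ i, 0 ≤ u i) ∧ Monotone u

/-- Two-sided iterates `θ^n`, `n ∈ ℤ`, of a measurable bijection. -/
def iterZ {Ω : Type*} [MeasurableSpace Ω] (θ : Ω ≃ᵐ Ω) : ℤ → Ω → Ω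
  | Int.ofNat n => (⇑θ)^[n]
  | Int.negSucc n => (⇑θ.symm)^[n + 1]

/-- The term `σ∘θ^{-k} − Σ_{i=1}^k τ∘θ^{-i}` (here `θinv = θ⁻¹`). -/
def Zterm {Ω : Type*} (θinv : Ω → Ω) (σ τ : Ω → ℝ) (k : ℕ) (ω : Ω) : ℝ :=
  σ (θinv^[k] ω) - ∑ i ∈ Finset.Icc 1 k, τ (θinv^[i] ω)

/-- `Z_ℓ = [sup_{k ≥ ℓ} (σ∘θ^{-k} − Σ_{i=1}^k τ∘θ^{-i})]⁺`. -/
def Zfam {Ω : Type*} (θinv : Ω → Ω) (σ τ : Ω → ℝ) (ℓ : ℕ) (ω : Ω) : ℝ :=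
  pos (⨆ k : {k : ℕ // ℓ ≤ k}, Zterm θinv σ τ (k : ℕ) ω)

/-- GI/GI input: the doubly infinite sequences `(σ∘θ^n)` and `(τ∘θ^n)` are
jointly independent, and each is identically distributed. -/
def GIGI {Ω : Type*} [MeasurableSpace Ω] (μ : Measure Ω) (θ : Ω ≃ᵐ Ω) (σ τ : Ω → ℝ) : Prop :=
  iIndepFun
    (fun x : ℤ × Bool => fun ω => if x.2 then σ (iterZ θ x.1 ω) else τ (iterZ θ x.1 ω)) μ
  ∧ (∀ n : ℤ, IdentDistrib (fun ω => σ (iterZ θ n ω)) σ μ μ)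
  ∧ (∀ n : ℤ, IdentDistrib (fun ω => τ (iterZ θ n ω)) τ μ μ)

/-- The distribution of `τ` has unbounded support. -/
def UnboundedSupport {Ω : Type*} [MeasurableSpace Ω] (μ : Measure Ω) (τ : Ω → ℝ) : Prop :=
  ∀ M : ℝ, 0 < M → 0 < μ {ω | M < τ ω}

/-- The Kiefer–Wolfowitz map `G(u) = sorted [u + σe₁ − τ𝟙]⁺`. -/
def Gmap (S : ℕ) (σ τ : ℝ) (u : Fin S → ℝ) : Fin S → ℝ :=
  sortVec fun i => pos (u i + (if (i : ℕ) = 0 then σ else 0) - τ)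

/-- The map `G^p` driving the J_{p+1}SW service profile. -/
def Gp (S p : ℕ) (hS : 0 < S) (σ τ : ℝ) (u : Fin S → ℝ) : Fin S → ℝ :=
  if u ⟨0, hS⟩ = 0 then Gmap S σ τ u
  else sortVec fun i => pos (u i + (if (i : ℕ) = p then σ else 0) - τ)

/-- The map `Γ^p`. -/
def Gamma (p : ℕ) (σ τ : ℝ) (u : Fin p → ℝ) : Fin p → ℝ := fun j =>
  if h : (j : ℕ) + 1 < p then pos (u ⟨(j : ℕ) + 1, h⟩ - τ) else pos (max (u j) σ - τ)

/-- The map `Ψ^p`. -/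
def Psi (p : ℕ) (σ τ : ℝ) (u : Fin p → ℝ) : Fin p → ℝ := fun j =>
  if h : (j : ℕ) + 1 < p then pos (min (max (u j) σ) (u ⟨(j : ℕ) + 1, h⟩) - τ)
  else pos (max (u j) σ - τ)

/-- The map `Φ^p` on `Ō_S` (with `1 ≤ p < S`). -/
def Phi (S p : ℕ) (hp : p < S) (σ τ : ℝ) (u : Fin S → ℝ) : Fin S → ℝ := fun j =>
  let ind : ℝ := if 0 < u ⟨0, Nat.lt_of_le_of_lt (Nat.zero_le p) hp⟩ then u ⟨p, hp⟩ else 0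
  if h : (j : ℕ) + 1 < S then
    if (j : ℕ) < p then pos (min (max (u j) σ) (u ⟨(j : ℕ) + 1, h⟩) - τ)
    else pos (min (max (u j) (σ + ind)) (u ⟨(j : ℕ) + 1, h⟩) - τ)
  else pos (max (u j) (σ + ind) - τ)

/-- The loss-system map `H^p(u) = sorted [u + σ·1_{u(1)=0}e₁ − τ𝟙]⁺`. -/
def Hmap (p : ℕ) (hp : 0 < p) (σ τ : ℝ) (u : Fin p → ℝ) : Fin p → ℝ :=
  sortVec fun i => pos (u i + (if (i : ℕ) = 0 ∧ u ⟨0, hp⟩ = 0 then σ else 0) - τ)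

end

theorem stmt11 {Ω : Type*} [MeasurableSpace Ω] (μ : MeasureTheory.Measure Ω)
    [MeasureTheory.IsProbabilityMeasure μ]
    (θ : Ω ≃ᵐ Ω) (hergo : Ergodic (⇑θ) μ)
    (σ τ : Ω → ℝ) (hσint : MeasureTheory.Integrable σ μ) (hτint : MeasureTheory.Integrable τ μ)
    (hσ0 : ∀ᵐ ω ∂μ, 0 ≤ σ ω) (hτ0 : ∀ᵐ ω ∂μ, 0 < τ ω)
    (S p : ℕ) (hS : 2 ≤ S) (hp1 : 1 ≤ p) (hpS : p ≤ S - 1)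
    (V : ℕ → Ω → Fin S → ℝ) (Y : ℕ → Ω → Fin p → ℝ)
    (hV0 : ∀ ω, V 0 ω = fun _ => 0)
    (hVrec : ∀ n ω, V (n + 1) ω =
      Phi S p (by omega) (σ (θ.symm ω)) (τ (θ.symm ω)) (V n (θ.symm ω)))
    (hY0 : ∀ ω, Y 0 ω = fun _ => 0)
    (hYrec : ∀ n ω, Y (n + 1) ω = Psi p (σ (θ.symm ω)) (τ (θ.symm ω)) (Y n (θ.symm ω))) :
    (∀ n : ℕ, ∀ᵐ ω ∂μ, ∀ j : Fin p, V n ω (Fin.castLE (by omega) j) ≤ Y n ω j) ∧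
    (∀ Vlim : Ω → Fin S → ℝ, ∀ Ylim : Ω → Fin p → ℝ,
      (∀ᵐ ω ∂μ, ∀ i : Fin S, Filter.Tendsto (fun n => V n ω i) Filter.atTop (nhds (Vlim ω i))) →
      (∀ᵐ ω ∂μ, ∀ i : Fin p, Filter.Tendsto (fun n => Y n ω i) Filter.atTop (nhds (Ylim ω i))) →
      ∀ᵐ ω ∂μ, ∀ j : Fin p, Vlim ω (Fin.castLE (by omega) j) ≤ Ylim ω j) := by
  have key : ∀ n : ℕ, ∀ ω, ∀ j : Fin p, V n ω (Fin.castLE (by omega) j) ≤ Y n ω j := by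
    intro n
    induction n with
    | zero => intro ω j; rw [hV0, hY0]
    | succ n ih =>
      intro ω j
      rw [hVrec, hYrec]
      set ω' := θ.symm ω
      have hjS : (j : ℕ) + 1 < S := by omega
      have hjp : (j : ℕ) < p := j.isLt
      unfold Phi Psi
      simp only [Fin.coe_castLE, dif_pos hjS, if_pos hjp]
      by_cases h' : (j : ℕ) + 1 < p
      · rw [dif_pos h']
        apply max_le_max _ le_rfl
        apply sub_le_sub_right
        apply min_le_min
        · exact max_le_max (ih ω' j) le_rfl
        · have := ih ω' ⟨(j : ℕ) + 1, h'⟩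
          simpa using this
      · rw [dif_neg h']
        refine le_trans (max_le_max (sub_le_sub_right (min_le_left _ _) _) le_rfl) ?_
        exact max_le_max (sub_le_sub_right (max_le_max (ih ω' j) le_rfl) _) le_rfl
  refine ⟨fun n => Filter.Eventually.of_forall (key n), ?_⟩
  intro Vlim Ylim hVt hYt
  filter_upwards [hVt, hYt] with ω hVω hYω j
  exact le_of_tendsto_of_tendsto' (hVω _) (hYω j) (fun n => key n ω j)
end

section
/- Fix reals σ ≥ 0 and τ ≥ 0, and an integer p ≥ 1. For any u, v ∈ Ō_p and any i ∈ {1,…,p}: if u(j) ≤ v(j) for all j ∈ {i,…,p}, then H^p(u)(j) ≤ Ψ^p(v)(j) for all j ∈ {i,…,p}. -/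
open MeasureTheory ProbabilityTheory Filter

lemma pos_mono {x y : ℝ} (h : x ≤ y) : pos x ≤ pos y := max_le_max h le_rfl

lemma sortVec_le_of_lt_card {n : ℕ} (w : Fin n → ℝ) (c : ℝ) (j : Fin n)
    (h : (j : ℕ) < Fintype.card {i // w i ≤ c}) : sortVec w j ≤ c := by
  have hm := Tuple.monotone_sort w
  have hcard : Fintype.card {i // (w ∘ Tuple.sort w) i ≤ c} = Fintype.card {i // w i ≤ c} :=
    Fintype.card_congr ((Tuple.sort w).subtypeEquiv (fun i => Iff.rfl))
  exact (Tuple.lt_card_le_iff_apply_le_of_monotone (a := c) (j := j) hm).mp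
    (by convert h using 1; rw [← hcard, Fintype.card_subtype])

lemma sortVec_le_of_interval {n : ℕ} (w : Fin n → ℝ) (c : ℝ) (j a b : Fin n)
    (hab : (j : ℕ) < (b : ℕ) + 1 - (a : ℕ))
    (hw : ∀ k, a ≤ k → k ≤ b → w k ≤ c) : sortVec w j ≤ c := by
  apply sortVec_le_of_lt_card
  rw [Fintype.card_subtype]
  calc (j : ℕ) < (Finset.Icc a b).card := by rw [Fin.card_Icc]; exact hab
    _ ≤ _ := Finset.card_le_card (by
        intro k hk
        rw [Finset.mem_Icc] at hk
        simp only [Finset.mem_filter, Finset.mem_univ, true_and]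
        exact hw k hk.1 hk.2)

theorem stmt14 (σ τ : ℝ) (hσ : 0 ≤ σ) (hτ : 0 ≤ τ)
    (p : ℕ) (hp : 1 ≤ p)
    (u v : Fin p → ℝ) (hu : OSorted u) (hv : OSorted v) (i : Fin p)
    (huv : ∀ j : Fin p, i ≤ j → u j ≤ v j) :
    ∀ j : Fin p, i ≤ j → Hmap p (by omega) σ τ u j ≤ Psi p σ τ v j := by
  intro j hij
  have humono := hu.2
  have huvj : u j ≤ v j := huv j hij
  have hmax := le_max_left (v j) σ
  have hmaxσ := le_max_right (v j) σ
  have main1 : Hmap p (by omega) σ τ u j ≤ pos (max (v j) σ - τ) := by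
    unfold Hmap
    apply sortVec_le_of_interval _ _ j ⟨0, by omega⟩ j (by simp)
    intro k _ hkj
    split_ifs with hk0
    · apply _root_.pos_mono
      have hk : k = ⟨0, by omega⟩ := Fin.ext hk0.1
      have : u k = 0 := by rw [hk]; exact hk0.2
      linarith
    · apply _root_.pos_mono
      have : u k ≤ u j := humono hkj
      linarith
  unfold Psi
  by_cases h : (j : ℕ) + 1 < p
  · rw [dif_pos h]
    by_cases h2 : max (v j) σ ≤ v ⟨(j : ℕ) + 1, h⟩
    · rw [min_eq_left h2]; exact main1
    · push_neg at h2
      rw [min_eq_right h2.le]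
      unfold Hmap
      apply sortVec_le_of_interval _ _ j ⟨1, by omega⟩ ⟨(j : ℕ) + 1, h⟩ (by simp)
      intro k hk1 hkj
      have hk1' : (1 : ℕ) ≤ (k : ℕ) := hk1
      split_ifs with hk0
      · omega
      · apply _root_.pos_mono
        have h3 : u k ≤ u ⟨(j : ℕ) + 1, h⟩ := humono hkj
        have h4 : u ⟨(j : ℕ) + 1, h⟩ ≤ v ⟨(j : ℕ) + 1, h⟩ := by
          apply huv
          exact le_trans hij (by exact Nat.le_succ (j : ℕ))
        linarith
  · rw [dif_neg h]; exact main1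
end

section
/- Let (Ω, F, P, θ) be a stationary ergodic quadruple carrying σ, τ as in the context. Then for every ℓ ∈ ℕ*, the random variable sup_{k ≥ ℓ}(σ∘θ^{-k} − Σ_{i=1}^{k} τ∘θ^{-i}) is finite almost surely; in particular Z_ℓ = [sup_{k ≥ ℓ}(σ∘θ^{-k} − Σ_{i=1}^{k} τ∘θ^{-i})]⁺ is a finite nonnegative random variable almost surely. -/
open MeasureTheory ProbabilityTheory Filter

section AuxLemmas

open MeasureTheory Filter

variable {Ω : Type*} [MeasurableSpace Ω]

theorem Integrable.comp_mp {μ : Measure Ω} {f : Ω → ℝ} {T : Ω → Ω}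
    (hT : MeasurePreserving T μ μ) (hf : Integrable f μ) :
    Integrable (fun x => f (T x)) μ := (hT.integrable_comp hf.1).2 hf

/-- Core lemma: if `T` is measure preserving and "ergodic", and `g` is integrable
with negative mean, then the Birkhoff sums of `g` are a.s. bounded above. -/
theorem core_bddAbove {μ : Measure Ω} [IsProbabilityMeasure μ] {T : Ω → Ω}
    (hT : MeasurePreserving T μ μ) (hTemb : MeasurableEmbedding T)
    (herg : ∀ s : Set Ω, MeasurableSet s → T ⁻¹' s = s → μ s = 0 ∨ μ s = 1)
    {g : Ω → ℝ} (hgm : Measurable g) (hgint : Integrable g μ)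
    (hgneg : ∫ x, g x ∂μ < 0) :
    ∀ᵐ x ∂μ, BddAbove (Set.range fun n => ∑ i ∈ Finset.range n, g (T^[i] x)) := by
  set S : ℕ → Ω → ℝ := fun n x => ∑ i ∈ Finset.range n, g (T^[i] x) with hSdef
  have hS0 : ∀ x, S 0 x = 0 := by intro x; simp [hSdef]
  have hSsucc : ∀ n x, S (n + 1) x = g x + S n (T x) := by
    intro n x
    simp only [hSdef]
    rw [Finset.sum_range_succ']
    simp only [Function.iterate_succ_apply, Function.iterate_zero_apply]
    ring
  have hSm : ∀ n, Measurable (S n) := fun n =>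
    Finset.measurable_sum _ fun i _ => hgm.comp (hT.measurable.iterate i)
  have hSint : ∀ n, Integrable (S n) μ := fun n =>
    integrable_finset_sum _ fun i _ => Integrable.comp_mp (hT.iterate i) hgint
  -- running maxima
  set M : ℕ → Ω → ℝ :=
    fun N => Nat.rec (fun _ => (0 : ℝ)) (fun N MN x => max (MN x) (S (N + 1) x)) N with hMdef
  have hM0 : ∀ x, M 0 x = 0 := fun _ => rfl
  have hMsucc : ∀ N x, M (N + 1) x = max (M N x) (S (N + 1) x) := fun _ _ => rfl
  have hMnn : ∀ N x, 0 ≤ M N x := by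
    intro N
    induction N with
    | zero => intro x; simp [hM0]
    | succ N ih => intro x; rw [hMsucc]; exact le_trans (ih x) (le_max_left _ _)
  have hMmono : ∀ N x, M N x ≤ M (N + 1) x := by
    intro N x; rw [hMsucc]; exact le_max_left _ _
  have hSleM : ∀ N n, n ≤ N → ∀ x, S n x ≤ M N x := by
    intro N
    induction N with
    | zero =>
      intro n hn x
      interval_cases n
      simp [hS0, hM0]
    | succ N ih =>
      intro n hn x
      rcases Nat.lt_succ_iff_lt_or_eq.mp (Nat.lt_succ_of_le hn) with h | h
      · exact le_trans (ih n (Nat.lt_succ_iff.mp h) x) (hMmono N x)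
      · subst h; rw [hMsucc]; exact le_max_right _ _
  have hkey : ∀ N x, 0 < M N x → M N x ≤ g x + M N (T x) := by
    intro N
    induction N with
    | zero => intro x hx; rw [hM0] at hx; exact absurd hx (lt_irrefl 0)
    | succ N ih =>
      intro x hx
      rcases le_or_gt (S (N + 1) x) (M N x) with h | h
      · have heq : M (N + 1) x = M N x := by rw [hMsucc]; exact max_eq_left h
        rw [heq] at hx ⊢
        exact le_trans (ih x hx) (by linarith [hMmono N (T x)])
      · have heq : M (N + 1) x = S (N + 1) x := by rw [hMsucc]; exact max_eq_right h.le
        rw [heq, hSsucc]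
        have := hSleM N N le_rfl (T x)
        have := hMmono N (T x)
        linarith
  have hMm : ∀ N, Measurable (M N) := by
    intro N
    induction N with
    | zero => simpa [hMdef] using measurable_const
    | succ N ih => exact Measurable.max ih (hSm (N + 1))
  have hMint : ∀ N, Integrable (M N) μ := by
    intro N
    induction N with
    | zero => simpa [hMdef] using (integrable_const (0 : ℝ))
    | succ N ih =>
      have h := ih.sup (hSint (N + 1))
      refine h.congr (Eventually.of_forall fun x => ?_)
      rw [hMsucc]
      simp [Pi.sup_apply]
  -- the sets E N
  set E : ℕ → Set Ω := fun N => {x | 0 < M N x} with hEdef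
  have hE : ∀ N, MeasurableSet (E N) := fun N => measurableSet_lt measurable_const (hMm N)
  have hMTint : ∀ N, Integrable (fun x => M N (T x)) μ := fun N =>
    Integrable.comp_mp hT (hMint N)
  have hIneq : ∀ N, 0 ≤ ∫ x in E N, g x ∂μ := by
    intro N
    have h1 : ∫ x in E N, (M N x - M N (T x)) ∂μ ≤ ∫ x in E N, g x ∂μ := by
      refine setIntegral_mono_on ((hMint N).sub (hMTint N)).integrableOn
        hgint.integrableOn (hE N) fun x hx => ?_
      have := hkey N x hx
      linarith
    have h2 : ∫ x in E N, (M N x - M N (T x)) ∂μ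
        = ∫ x in E N, M N x ∂μ - ∫ x in E N, M N (T x) ∂μ :=
      integral_sub (hMint N).integrableOn (hMTint N).integrableOn
    have h3 : ∫ x in E N, M N x ∂μ = ∫ x, M N x ∂μ := by
      refine setIntegral_eq_integral_of_forall_compl_eq_zero fun x hx => ?_
      have hx' : ¬ 0 < M N x := hx
      exact le_antisymm (not_lt.1 hx') (hMnn N x)
    have h4 : ∫ x in E N, M N (T x) ∂μ ≤ ∫ x, M N (T x) ∂μ :=
      setIntegral_le_integral (hMTint N) (Eventually.of_forall fun x => hMnn N (T x))
    have h5 : ∫ x, M N (T x) ∂μ = ∫ x, M N x ∂μ := hT.integral_comp hTemb _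
    linarith
  -- the invariant set
  set A : Set Ω := {x | ∀ c : ℕ, ∃ n, (c : ℝ) < S n x} with hAdef
  have hAm : MeasurableSet A := by
    have : A = ⋂ c : ℕ, ⋃ n : ℕ, {x | (c : ℝ) < S n x} := by
      ext x; simp [hAdef]
    rw [this]
    exact MeasurableSet.iInter fun c => MeasurableSet.iUnion fun n =>
      measurableSet_lt measurable_const (hSm n)
  have hAinv : T ⁻¹' A = A := by
    ext x
    simp only [Set.mem_preimage, hAdef, Set.mem_setOf_eq]
    constructor
    · intro h c
      obtain ⟨n, hn⟩ := h ⌈(c : ℝ) - g x⌉₊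
      refine ⟨n + 1, ?_⟩
      rw [hSsucc]
      have := Nat.le_ceil ((c : ℝ) - g x)
      linarith
    · intro h c
      obtain ⟨n, hn⟩ := h ⌈(c : ℝ) + g x⌉₊
      have hle := Nat.le_ceil ((c : ℝ) + g x)
      cases n with
      | zero =>
        rw [hS0] at hn
        have : (0 : ℝ) ≤ (⌈(c : ℝ) + g x⌉₊ : ℝ) := Nat.cast_nonneg _
        linarith
      | succ m =>
        refine ⟨m, ?_⟩
        rw [hSsucc] at hn
        linarith
  rcases herg A hAm hAinv with h0 | h1
  · -- measure zero : bounded above a.s.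
    have hcae : ∀ᵐ x ∂μ, x ∉ A := compl_mem_ae_iff.2 h0
    filter_upwards [hcae] with x hx
    have hex : ∃ c : ℕ, ∀ n, S n x ≤ (c : ℝ) := by
      by_contra hc
      push_neg at hc
      exact hx fun c => by
        obtain ⟨n, hn⟩ := hc c
        exact ⟨n, hn⟩
    obtain ⟨c, hc⟩ := hex
    exact ⟨(c : ℝ), by rintro y ⟨n, rfl⟩; exact hc n⟩
  · -- measure one : contradiction with negative mean
    exfalso
    have hcompl : μ Aᶜ = 0 := by
      have := measure_compl hAm (measure_ne_top μ A)
      rw [h1, measure_univ] at this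
      simpa using this
    have hAae : ∀ᵐ x ∂μ, x ∈ A := by
      rw [MeasureTheory.ae_iff]
      exact hcompl
    have hconv : ∀ᵐ x ∂μ, Tendsto (fun N => (E N).indicator g x) atTop (nhds (g x)) := by
      filter_upwards [hAae] with x hx
      obtain ⟨n, hn⟩ := hx 0
      rw [Nat.cast_zero] at hn
      refine tendsto_const_nhds.congr' ?_
      filter_upwards [eventually_ge_atTop n] with N hN
      have hxE : x ∈ E N := lt_of_lt_of_le hn (hSleM N n hN x)
      exact (Set.indicator_of_mem hxE g).symm
    have hT2 : Tendsto (fun N => ∫ x, (E N).indicator g x ∂μ) atTop (nhds (∫ x, g x ∂μ)) := by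
      refine tendsto_integral_of_dominated_convergence (fun x => |g x|)
        (fun N => hgint.1.indicator (hE N)) hgint.abs
        (fun N => Eventually.of_forall fun x => ?_) hconv
      calc ‖(E N).indicator g x‖ ≤ ‖g x‖ := norm_indicator_le_norm_self g x
        _ = |g x| := Real.norm_eq_abs _
    have hge : 0 ≤ ∫ x, g x ∂μ := by
      refine ge_of_tendsto hT2 (Eventually.of_forall fun N => ?_)
      rw [integral_indicator (hE N)]
      exact hIneq N
    linarith

/-- Telescoping identity for `Zterm`. -/
theorem Zterm_formula (θ : Ω ≃ᵐ Ω) (σ' τ' : Ω → ℝ) (k : ℕ) (ω : Ω) :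
    Zterm (⇑θ.symm) σ' τ' k ω
      = σ' ω + ∑ i ∈ Finset.range k,
          (fun x => σ' x - σ' (θ x) - τ' x) ((⇑θ.symm)^[i] (θ.symm ω)) := by
  induction k with
  | zero => simp [Zterm]
  | succ k ih =>
    rw [Finset.sum_range_succ]
    have hiter : (⇑θ.symm)^[k] (θ.symm ω) = (⇑θ.symm)^[k + 1] ω :=
      (Function.iterate_succ_apply (⇑θ.symm) k ω).symm
    have hθ : θ ((⇑θ.symm)^[k + 1] ω) = (⇑θ.symm)^[k] ω := by
      rw [Function.iterate_succ_apply']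
      exact θ.apply_symm_apply _
    unfold Zterm at ih ⊢
    rw [Finset.sum_Icc_succ_top (Nat.succ_le_succ (Nat.zero_le k))]
    simp only [hiter, hθ]
    linarith [ih]

end AuxLemmas

theorem stmt16 {Ω : Type*} [MeasurableSpace Ω] (μ : MeasureTheory.Measure Ω)
    [MeasureTheory.IsProbabilityMeasure μ]
    (θ : Ω ≃ᵐ Ω) (hergo : Ergodic (⇑θ) μ)
    (σ τ : Ω → ℝ) (hσint : MeasureTheory.Integrable σ μ) (hτint : MeasureTheory.Integrable τ μ)
    (hσ0 : ∀ᵐ ω ∂μ, 0 ≤ σ ω) (hτ0 : ∀ᵐ ω ∂μ, 0 < τ ω) :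
    ∀ ℓ : ℕ, 1 ≤ ℓ →
      ∀ᵐ ω ∂μ,
        BddAbove (Set.range fun k : {k : ℕ // ℓ ≤ k} => Zterm (⇑θ.symm) σ τ (k : ℕ) ω) ∧
        0 ≤ Zfam (⇑θ.symm) σ τ ℓ ω := by
  intro ℓ hℓ
  -- measurable modifications
  set σ' : Ω → ℝ := hσint.1.mk σ with hσ'def
  set τ' : Ω → ℝ := hτint.1.mk τ with hτ'def
  have hσ'm : Measurable σ' := hσint.1.stronglyMeasurable_mk.measurable
  have hτ'm : Measurable τ' := hτint.1.stronglyMeasurable_mk.measurable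
  have hσeq : σ =ᵐ[μ] σ' := hσint.1.ae_eq_mk
  have hτeq : τ =ᵐ[μ] τ' := hτint.1.ae_eq_mk
  have hσ'int : MeasureTheory.Integrable σ' μ := hσint.congr hσeq
  have hτ'int : MeasureTheory.Integrable τ' μ := hτint.congr hτeq
  set T : Ω → Ω := ⇑θ.symm with hTdef
  have hT : MeasureTheory.MeasurePreserving T μ μ :=
    MeasureTheory.MeasurePreserving.symm θ hergo.toMeasurePreserving
  have hTemb : MeasurableEmbedding T := θ.symm.measurableEmbedding
  -- ergodicity for T
  have herg : ∀ s : Set Ω, MeasurableSet s → T ⁻¹' s = s → μ s = 0 ∨ μ s = 1 := by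
    intro s hs hinv
    have hinv2 : θ ⁻¹' s = s := by
      have h1 : θ ⁻¹' (T ⁻¹' s) = θ ⁻¹' s := congrArg (fun t => θ ⁻¹' t) hinv
      rw [← Set.preimage_comp] at h1
      have h2 : (T ∘ ⇑θ) = id := by
        funext x; exact θ.symm_apply_apply x
      rw [h2] at h1
      simpa using h1.symm
    rcases hergo.toPreErgodic.ae_empty_or_univ hs hinv2 with h | h
    · left
      have := MeasureTheory.measure_congr h
      simpa using this
    · right
      have := MeasureTheory.measure_congr h
      simpa using this
  -- the driving function g
  set g : Ω → ℝ := fun x => σ' x - σ' (θ x) - τ' x with hgdef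
  have hσθint : MeasureTheory.Integrable (fun x => σ' (θ x)) μ :=
    Integrable.comp_mp hergo.toMeasurePreserving hσ'int
  have hgm : Measurable g := (hσ'm.sub (hσ'm.comp θ.measurable)).sub hτ'm
  have hgint : MeasureTheory.Integrable g μ := (hσ'int.sub hσθint).sub hτ'int
  -- positivity of ∫ τ
  have hτpos : 0 < ∫ x, τ x ∂μ := by
    rw [MeasureTheory.integral_pos_iff_support_of_nonneg_ae
      (hτ0.mono fun x hx => hx.le) hτint]
    have h1 : μ {ω | ¬ 0 < τ ω} = 0 := MeasureTheory.ae_iff.1 hτ0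
    rw [pos_iff_ne_zero]
    intro h0
    have huniv : (Set.univ : Set Ω) ⊆ Function.support τ ∪ {ω | ¬ 0 < τ ω} := by
      intro x _
      by_cases hx : τ x = 0
      · right; simp [hx]
      · left; exact hx
    have : μ Set.univ ≤ 0 := by
      refine le_trans (MeasureTheory.measure_mono huniv) ?_
      refine le_trans (MeasureTheory.measure_union_le _ _) ?_
      rw [h0, h1]; simp
    rw [MeasureTheory.measure_univ] at this
    exact absurd this (by simp)
  -- mean of g is negative
  have hgneg : ∫ x, g x ∂μ < 0 := by
    have e1 : ∫ x, σ' (θ x) ∂μ = ∫ x, σ' x ∂μ :=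
      hergo.toMeasurePreserving.integral_comp θ.measurableEmbedding σ'
    have e2 : ∫ x, g x ∂μ
        = (∫ x, σ' x ∂μ - ∫ x, σ' (θ x) ∂μ) - ∫ x, τ' x ∂μ := by
      rw [hgdef]
      rw [show (fun x => σ' x - σ' (θ x) - τ' x)
          = fun x => (σ' x - σ' (θ x)) - τ' x from rfl]
      rw [MeasureTheory.integral_sub
          (show Integrable (fun x => σ' x - σ' (θ x)) μ from hσ'int.sub hσθint) hτ'int,
        MeasureTheory.integral_sub hσ'int hσθint]
    have e3 : ∫ x, τ' x ∂μ = ∫ x, τ x ∂μ := MeasureTheory.integral_congr_ae hτeq.symm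
    rw [e2, e1, e3]
    linarith
  -- core a.s. boundedness
  have hcore := core_bddAbove hT hTemb herg hgm hgint hgneg
  have hTP : ∀ᵐ ω ∂μ,
      BddAbove (Set.range fun n => ∑ i ∈ Finset.range n, g (T^[i] (T ω))) :=
    (hT.quasiMeasurePreserving.tendsto_ae).eventually hcore
  have heqs : ∀ᵐ ω ∂μ, ∀ k : ℕ,
      σ (T^[k] ω) = σ' (T^[k] ω) ∧ τ (T^[k] ω) = τ' (T^[k] ω) := by
    rw [MeasureTheory.ae_all_iff]
    intro k
    exact ((hT.iterate k).quasiMeasurePreserving.tendsto_ae).eventually (hσeq.and hτeq)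
  filter_upwards [hTP, heqs] with ω hb heq
  constructor
  · obtain ⟨c, hc⟩ := hb
    have hZ : ∀ k : ℕ, Zterm (⇑θ.symm) σ τ k ω ≤ σ' ω + c := by
      intro k
      have h1 : Zterm (⇑θ.symm) σ τ k ω = Zterm (⇑θ.symm) σ' τ' k ω := by
        unfold Zterm
        rw [(heq k).1]
        congr 1
        refine Finset.sum_congr rfl fun i _ => (heq i).2
      have h2 := Zterm_formula θ σ' τ' k ω
      have h3 : (∑ i ∈ Finset.range k, g (T^[i] (T ω))) ≤ c :=
        hc (Set.mem_range_self k)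
      rw [h1, h2]
      have h4 : (∑ i ∈ Finset.range k,
          (fun x => σ' x - σ' (θ x) - τ' x) ((⇑θ.symm)^[i] (θ.symm ω)))
          = ∑ i ∈ Finset.range k, g (T^[i] (T ω)) := rfl
      rw [h4]
      linarith
    exact ⟨σ' ω + c, by rintro y ⟨k, rfl⟩; exact hZ k⟩
  · exact le_max_right _ _
end

section
/- Let (Ω, F, P, θ) be a stationary ergodic quadruple carrying σ, τ as in the context. Then P(Z_1 ≤ σ) > 0, where Z_1 = [sup_{k ≥ 1}(σ∘θ^{-k} − Σ_{i=1}^{k} τ∘θ^{-i})]⁺. -/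
open MeasureTheory ProbabilityTheory Filter

section helper

lemma pos_nonneg (x : ℝ) : 0 ≤ pos x := le_max_right x 0

lemma pos_eq_self_of_pos {x : ℝ} (h : 0 < pos x) : pos x = x := by
  rcases le_or_gt x 0 with h' | h'
  · simp [pos, max_eq_right h'] at h
  · simp [pos, max_eq_left h'.le]

lemma sum_Icc_one (h : ℕ → ℝ) (k : ℕ) :
    ∑ i ∈ Finset.Icc 1 k, h i = ∑ i ∈ Finset.range k, h (i + 1) := by
  induction k with
  | zero => simp
  | succ k ih =>
      rw [Finset.sum_Icc_succ_top (Nat.le_add_left 1 k), ih, Finset.sum_range_succ]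

variable {Ω : Type*} [MeasurableSpace Ω]

lemma Zterm_shift (θ : Ω ≃ᵐ Ω) (σ τ : Ω → ℝ) (k : ℕ) (ω : Ω) :
    Zterm (⇑θ.symm) σ τ (k + 1) (θ ω) = Zterm (⇑θ.symm) σ τ k ω - τ ω := by
  have hit : ∀ m : ℕ, (⇑θ.symm)^[m + 1] (θ ω) = (⇑θ.symm)^[m] ω := by
    intro m
    rw [Function.iterate_succ_apply]
    simp
  unfold Zterm
  rw [sum_Icc_one, sum_Icc_one, Finset.sum_range_succ']
  simp only [hit, Function.iterate_zero_apply]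
  ring

lemma Zstep (θ : Ω ≃ᵐ Ω) (σ τ : Ω → ℝ) (ω : Ω)
    (hσ : 0 ≤ σ ω) (hlt : σ ω < Zfam (⇑θ.symm) σ τ 1 ω) :
    Zfam (⇑θ.symm) σ τ 1 (θ ω) = pos (Zfam (⇑θ.symm) σ τ 1 ω - τ ω) := by
  set F : ℕ → ℝ := fun k => Zterm (⇑θ.symm) σ τ k ω with hF
  set R : Set ℝ := Set.range F with hRdef
  set R₁ : Set ℝ := Set.range (fun k : {k : ℕ // 1 ≤ k} => F (k : ℕ)) with hR₁def
  have hZ : Zfam (⇑θ.symm) σ τ 1 ω = pos (sSup R₁) := rfl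
  have hF0 : F 0 = σ ω := by simp [hF, Zterm]
  have h0 : 0 < Zfam (⇑θ.symm) σ τ 1 ω := lt_of_le_of_lt hσ hlt
  have hposS : 0 < pos (sSup R₁) := hZ ▸ h0
  have hZeq : Zfam (⇑θ.symm) σ τ 1 ω = sSup R₁ := hZ.trans (pos_eq_self_of_pos hposS)
  have hS1pos : 0 < sSup R₁ := hZeq ▸ h0
  have hne1 : R₁.Nonempty := ⟨F 1, ⟨⟨1, le_rfl⟩, rfl⟩⟩
  have hbdd1 : BddAbove R₁ := by
    by_contra hb
    rw [csSup_of_not_bddAbove hb, Real.sSup_empty] at hS1pos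
    exact lt_irrefl 0 hS1pos
  have hR : R = insert (σ ω) R₁ := by
    ext x
    constructor
    · rintro ⟨k, rfl⟩
      rcases Nat.eq_zero_or_pos k with hk | hk
      · subst hk; exact Or.inl hF0
      · exact Or.inr ⟨⟨k, hk⟩, rfl⟩
    · rintro (rfl | ⟨⟨k, hk⟩, rfl⟩)
      · exact ⟨0, hF0⟩
      · exact ⟨k, rfl⟩
  have hneR : R.Nonempty := ⟨F 0, 0, rfl⟩
  have hbddR : BddAbove R := by
    rw [hR]; exact hbdd1.insert _
  have hSR : sSup R = sSup R₁ := by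
    rw [hR, csSup_insert hbdd1 hne1]
    exact sup_eq_right.2 (le_of_lt (hZeq ▸ hlt))
  set R' : Set ℝ := Set.range
      (fun k : {k : ℕ // 1 ≤ k} => Zterm (⇑θ.symm) σ τ (k : ℕ) (θ ω)) with hR'def
  have hZ' : Zfam (⇑θ.symm) σ τ 1 (θ ω) = pos (sSup R') := rfl
  have hR' : R' = (fun x => x - τ ω) '' R := by
    ext x
    constructor
    · rintro ⟨⟨k, hk⟩, rfl⟩
      obtain ⟨m, rfl⟩ : ∃ m, k = m + 1 := ⟨k - 1, by omega⟩
      exact ⟨F m, ⟨m, rfl⟩, (Zterm_shift θ σ τ m ω).symm⟩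
    · rintro ⟨y, ⟨m, rfl⟩, rfl⟩
      exact ⟨⟨m + 1, Nat.le_add_left 1 m⟩, Zterm_shift θ σ τ m ω⟩
  have hlub : IsLUB R (sSup R) := isLUB_csSup hneR hbddR
  have hlub' : IsLUB R' (sSup R - τ ω) := by
    rw [hR']
    constructor
    · rintro y ⟨x, hx, rfl⟩
      exact sub_le_sub_right (hlub.1 hx) _
    · intro b hb
      have hub : sSup R ≤ b + τ ω := hlub.2 fun x hx =>
        sub_le_iff_le_add.1 (hb ⟨x, hx, rfl⟩)
      linarith
  have hne' : R'.Nonempty := ⟨_, ⟨⟨1, le_rfl⟩, rfl⟩⟩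
  have hsR' : sSup R' = sSup R - τ ω := hlub'.csSup_eq hne'
  rw [hZ', hsR', hSR, hZeq]

end helper

theorem stmt17 {Ω : Type*} [MeasurableSpace Ω] (μ : MeasureTheory.Measure Ω)
    [MeasureTheory.IsProbabilityMeasure μ]
    (θ : Ω ≃ᵐ Ω) (hergo : Ergodic (⇑θ) μ)
    (σ τ : Ω → ℝ) (hσint : MeasureTheory.Integrable σ μ) (hτint : MeasureTheory.Integrable τ μ)
    (hσ0 : ∀ᵐ ω ∂μ, 0 ≤ σ ω) (hτ0 : ∀ᵐ ω ∂μ, 0 < τ ω) :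
    0 < μ {ω | Zfam (⇑θ.symm) σ τ 1 ω ≤ σ ω} := by
  by_contra hcon
  rw [pos_iff_ne_zero, not_not] at hcon
  set Z : Ω → ℝ := Zfam (⇑θ.symm) σ τ 1 with hZdef
  have hmp : MeasurePreserving (⇑θ) μ μ := hergo.toMeasurePreserving
  haveI : Filter.NeBot (ae μ) := ae_neBot.2 (IsProbabilityMeasure.ne_zero μ)
  -- a.e. σ < Z
  have hlt : ∀ᵐ ω ∂μ, σ ω < Z ω := by
    rw [ae_iff]
    convert hcon using 2
    ext ω
    simp [not_lt]
  -- measurable version of τ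
  set τ' : Ω → ℝ := hτint.1.mk τ with hτ'def
  have hτ'meas : Measurable τ' := hτint.1.stronglyMeasurable_mk.measurable
  have hτ'eq : τ =ᵐ[μ] τ' := hτint.1.ae_eq_mk
  -- the "good" full-measure predicate
  set Good : Ω → Prop := fun ω => 0 ≤ σ ω ∧ σ ω < Z ω ∧ τ ω = τ' ω ∧ 0 < τ ω with hGooddef
  have hGood : ∀ᵐ ω ∂μ, Good ω := by
    filter_upwards [hσ0, hlt, hτ'eq, hτ0] with ω h1 h2 h3 h4
    exact ⟨h1, h2, h3, h4⟩
  have hGn : ∀ᵐ ω ∂μ, ∀ n : ℕ, Good ((⇑θ)^[n] ω) :=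
    ae_all_iff.2 fun n => ((hmp.iterate n).quasiMeasurePreserving).ae hGood
  -- a set of positive measure where τ' is bounded below
  have hτ'pos : ∀ᵐ ω ∂μ, 0 < τ' ω := by
    filter_upwards [hτ0, hτ'eq] with ω h1 h2
    exact h2 ▸ h1
  obtain ⟨N₀, hA0⟩ : ∃ n : ℕ, μ {ω | 1 / ((n : ℝ) + 1) ≤ τ' ω} ≠ 0 := by
    by_contra h
    push_neg at h
    have h1 : ∀ᵐ ω ∂μ, ∀ n : ℕ, ¬(1 / ((n : ℝ) + 1) ≤ τ' ω) :=
      ae_all_iff.2 fun n => by rw [ae_iff]; simpa using h n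
    obtain ⟨ω, hω1, hω2⟩ := (h1.and hτ'pos).exists
    obtain ⟨n, hn⟩ := exists_nat_one_div_lt hω2
    exact hω1 n hn.le
  set ε : ℝ := 1 / ((N₀ : ℝ) + 1) with hεdef
  have hε : 0 < ε := by positivity
  set A : Set Ω := {ω | ε ≤ τ' ω} with hAdef
  have hAmeas : MeasurableSet A := measurableSet_le measurable_const hτ'meas
  -- the recurrence set V
  set V : Set Ω := ⋂ m : ℕ, ⋃ n : ℕ, (⇑θ)^[m + n] ⁻¹' A with hVdef
  have hVmeas : MeasurableSet V :=
    MeasurableSet.iInter fun m => MeasurableSet.iUnion fun n =>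
      (θ.measurable.iterate (m + n)) hAmeas
  have hmemV : ∀ x, x ∈ V ↔ ∃ᶠ n in atTop, (⇑θ)^[n] x ∈ A := by
    intro x
    simp only [hVdef, Set.mem_iInter, Set.mem_iUnion, Set.mem_preimage, frequently_atTop]
    constructor
    · intro h m
      obtain ⟨n, hn⟩ := h m
      exact ⟨m + n, Nat.le_add_right m n, hn⟩
    · intro h m
      obtain ⟨b, hb, hbA⟩ := h m
      refine ⟨b - m, ?_⟩
      have : m + (b - m) = b := by omega
      rw [this]
      exact hbA
  have hVinv : (⇑θ) ⁻¹' V = V := by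
    have hpre : ∀ k : ℕ, (⇑θ) ⁻¹' ((⇑θ)^[k] ⁻¹' A) = (⇑θ)^[k + 1] ⁻¹' A := by
      intro k
      rw [← Set.preimage_comp, ← Function.iterate_succ]
    ext x
    simp only [hVdef, Set.mem_preimage, Set.mem_iInter, Set.mem_iUnion]
    constructor
    · intro h m
      obtain ⟨n, hn⟩ := h m
      rw [← Function.iterate_succ_apply] at hn
      refine ⟨n + 1, ?_⟩
      have e : m + (n + 1) = (m + n).succ := by omega
      rw [e]
      exact hn
    · intro h m
      obtain ⟨n, hn⟩ := h (m + 1)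
      refine ⟨n, ?_⟩
      rw [← Function.iterate_succ_apply]
      have e : (m + n).succ = m + 1 + n := by omega
      rw [e]
      exact hn
  have hV01 : μ V = 0 ∨ μ V = 1 :=
    hergo.toPreErgodic.prob_eq_zero_or_one hVmeas hVinv
  have hVfull : μ V = 1 := by
    rcases hV01 with hV0 | hV1
    · exfalso
      have hcons : Conservative (⇑θ) μ := hmp.conservative
      have hrec : ∀ᵐ x ∂μ, x ∈ A → ∃ᶠ n in atTop, (⇑θ)^[n] x ∈ A :=
        hcons.ae_mem_imp_frequently_image_mem hAmeas.nullMeasurableSet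
      have hnotV : ∀ᵐ x ∂μ, x ∉ V := by
        rw [ae_iff]
        simpa using hV0
      have hnA : ∀ᵐ x ∂μ, x ∉ A := by
        filter_upwards [hrec, hnotV] with x h1 h2 hxA
        exact h2 ((hmemV x).2 (h1 hxA))
      apply hA0
      have : μ {x | ¬ x ∉ A} = 0 := ae_iff.1 hnA
      simpa [not_not] using this
    · exact hV1
  have hVae : ∀ᵐ x ∂μ, x ∈ V := by
    rw [ae_iff]
    have : μ Vᶜ = 0 := by
      rw [measure_compl hVmeas (measure_ne_top μ V), hVfull, measure_univ, tsub_self]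
    exact this
  -- pick a point in the full-measure set
  obtain ⟨ω, hGω, hVω⟩ := (hGn.and hVae).exists
  -- iteration identity
  have h1 : ∀ n : ℕ, Z ((⇑θ)^[n + 1] ω) = Z ((⇑θ)^[n] ω) - τ ((⇑θ)^[n] ω) := by
    intro n
    have hstep := Zstep θ σ τ ((⇑θ)^[n] ω) (hGω n).1 (hGω n).2.1
    rw [← hZdef] at hstep
    have hiter : (⇑θ)^[n + 1] ω = θ ((⇑θ)^[n] ω) := Function.iterate_succ_apply' _ n ω
    have hpos2 : 0 < Z ((⇑θ)^[n + 1] ω) :=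
      lt_of_le_of_lt (hGω (n + 1)).1 (hGω (n + 1)).2.1
    rw [hiter, hstep]
    apply pos_eq_self_of_pos
    rw [← hstep, ← hiter]
    exact hpos2
  have h2 : ∀ n : ℕ, Z ((⇑θ)^[n] ω) = Z ω - ∑ i ∈ Finset.range n, τ ((⇑θ)^[i] ω) := by
    intro n
    induction n with
    | zero => simp
    | succ n ih => rw [h1 n, ih, Finset.sum_range_succ]; ring
  have h3 : ∀ n : ℕ, ∑ i ∈ Finset.range n, τ ((⇑θ)^[i] ω) ≤ Z ω := by
    intro n
    have hge : (0 : ℝ) ≤ Z ((⇑θ)^[n] ω) := pos_nonneg _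
    rw [h2 n] at hge
    linarith
  -- unboundedness of the partial sums
  have hI : {n : ℕ | (⇑θ)^[n] ω ∈ A}.Infinite :=
    Nat.frequently_atTop_iff_infinite.1 ((hmemV ω).1 hVω)
  have hZpos : 0 < Z ω :=
    lt_of_le_of_lt (by simpa using (hGω 0).1) (by simpa using (hGω 0).2.1)
  obtain ⟨N, hN⟩ := exists_nat_gt (Z ω / ε)
  have hNε : Z ω < (N : ℝ) * ε := (div_lt_iff₀ hε).1 hN
  obtain ⟨J, hJsub, hJcard⟩ := hI.exists_subset_card_eq N
  have hJrange : J ⊆ Finset.range (J.sup id + 1) := by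
    intro j hj
    simp only [Finset.mem_range]
    exact Nat.lt_succ_of_le (Finset.le_sup (f := id) hj)
  have h4 : (N : ℝ) * ε ≤ ∑ i ∈ Finset.range (J.sup id + 1), τ ((⇑θ)^[i] ω) := by
    calc (N : ℝ) * ε = ∑ _i ∈ J, ε := by rw [Finset.sum_const, hJcard, nsmul_eq_mul]
    _ ≤ ∑ i ∈ J, τ ((⇑θ)^[i] ω) := by
        apply Finset.sum_le_sum
        intro i hi
        have hiA : (⇑θ)^[i] ω ∈ A := hJsub hi
        have := (hGω i).2.2.1
        rw [this]
        exact hiA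
    _ ≤ ∑ i ∈ Finset.range (J.sup id + 1), τ ((⇑θ)^[i] ω) := by
        apply Finset.sum_le_sum_of_subset_of_nonneg hJrange
        intro i _ _
        exact le_of_lt (hGω i).2.2.2
  have := h3 (J.sup id + 1)
  linarith
end
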